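/- arXiv:1805.11955 — 5 statements merged into one kernel-verified Lean document; each statement's English description precedes it below -/
import Mathlib

section
/- Let G be a groupoid and let R be a G-graded ring whose grading is left (or right) non-degenerate. Then the ring extension R / ∩_{e∈G_0} C_R(Z(R_e)) has the ideal intersection property, i.e. every nonzero ideal of R has nonzero intersection with ∩_{e∈G_0} C_R(Z(R_e)). -/
open Pointwise CategoryTheory

namespace PaperGrpd

/-- The set of morphisms `G₁` of a groupoid, bundled with their domain and codomain:
`⟨a, b, g⟩` is the morphism `g : a ⟶ b`, with `d(g) = a` and `c(g) = b`. -/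
abbrev GMor (G : Type*) [Groupoid G] := Σ a b : G, a ⟶ b

variable {G : Type*} [Groupoid G] {R : Type*} [NonUnitalRing R]

/-- The additive subgroup of finite sums of products `a * b` with `a ∈ A`, `b ∈ B`. -/
def sumProd (A B : AddSubgroup R) : AddSubgroup R :=
  AddSubgroup.closure ((A : Set R) * (B : Set R))

/-- `I` is a two-sided ideal of the (possibly non-unital) ring `R`. -/
def IsRingIdeal (I : AddSubgroup R) : Prop :=
  ∀ r : R, ∀ x ∈ I, r * x ∈ I ∧ x * r ∈ I

/-- `𝓡` is a grading of `R` by the groupoid `G`: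
`R = ⊕_{g ∈ G₁} R_g`, with `R_g R_h ⊆ R_{gh}` for composable pairs and
`R_g R_h = {0}` for non-composable pairs. -/
def IsGroupoidGrading (𝓡 : GMor G → AddSubgroup R) : Prop :=
  (⨆ m : GMor G, 𝓡 m) = (⊤ : AddSubgroup R) ∧
  (∀ m : GMor G, Disjoint (𝓡 m) (⨆ m' ∈ {m' : GMor G | m' ≠ m}, 𝓡 m')) ∧
  (∀ (a b c : G) (g : b ⟶ c) (h : a ⟶ b),
    ∀ x ∈ 𝓡 ⟨b, c, g⟩, ∀ y ∈ 𝓡 ⟨a, b, h⟩, x * y ∈ 𝓡 ⟨a, c, h ≫ g⟩) ∧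
  (∀ m m' : GMor G, m.1 ≠ m'.2.1 → ∀ x ∈ 𝓡 m, ∀ y ∈ 𝓡 m', x * y = 0)

/-- `R₀ = ⊕_{e ∈ G₀} R_e`. -/
def grZero (𝓡 : GMor G → AddSubgroup R) : AddSubgroup R :=
  ⨆ e : G, 𝓡 ⟨e, e, 𝟙 e⟩

/-- `∩_{e ∈ G₀} C_R(Z(R_e))` as a subset of `R`. -/
def capCent (𝓡 : GMor G → AddSubgroup R) : Set R :=
  {x : R | ∀ e : G, ∀ z : R,
    (z ∈ 𝓡 ⟨e, e, 𝟙 e⟩ ∧ ∀ y ∈ 𝓡 ⟨e, e, 𝟙 e⟩, z * y = y * z) → x * z = z * x}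

/-- `R` is graded simple: `{0}` and `R` are the only graded ideals. -/
def GradedSimple (𝓡 : GMor G → AddSubgroup R) : Prop :=
  ∀ I : AddSubgroup R, IsRingIdeal I → I = (⨆ m : GMor G, (I ⊓ 𝓡 m)) →
    I = ⊥ ∨ I = ⊤

/-- The grading is left non-degenerate. -/
def LeftNonDeg (𝓡 : GMor G → AddSubgroup R) : Prop :=
  ∀ (a b : G) (g : a ⟶ b), ∀ r ∈ 𝓡 ⟨a, b, g⟩, r ≠ 0 →
    ∃ x ∈ 𝓡 ⟨b, a, Groupoid.inv g⟩, x * r ≠ 0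

/-- The grading is right non-degenerate. -/
def RightNonDeg (𝓡 : GMor G → AddSubgroup R) : Prop :=
  ∀ (a b : G) (g : a ⟶ b), ∀ r ∈ 𝓡 ⟨a, b, g⟩, r ≠ 0 →
    ∃ x ∈ 𝓡 ⟨b, a, Groupoid.inv g⟩, r * x ≠ 0

/-- `R` is a simple ring: `{0}` and `R` are the only two-sided ideals. -/
def RingSimple (R' : Type*) [NonUnitalRing R'] : Prop :=
  ∀ I : AddSubgroup R', IsRingIdeal I → I = ⊥ ∨ I = ⊤

open scoped Classical

/-- Every element has a homogeneous decomposition. -/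
lemma rep_exists (𝓡 : GMor G → AddSubgroup R) (hgr : IsGroupoidGrading 𝓡) (x : R) :
    ∃ (t : Finset (GMor G)) (f : GMor G → R),
      (∀ m, f m ∈ 𝓡 m) ∧ x = ∑ m ∈ t, f m := by
  have hx : x ∈ AddSubgroup.closure (⋃ m : GMor G, (𝓡 m : Set R)) := by
    have hle : (⨆ m : GMor G, 𝓡 m) ≤ AddSubgroup.closure (⋃ m : GMor G, (𝓡 m : Set R)) :=
      iSup_le fun m => fun r hr => AddSubgroup.subset_closure (Set.mem_iUnion.2 ⟨m, hr⟩)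
    exact hle (by rw [hgr.1]; trivial)
  induction hx using AddSubgroup.closure_induction with
  | mem r hr =>
      obtain ⟨_, ⟨m, rfl⟩, hm⟩ := hr
      exact ⟨{m}, fun m' => if h : m' = m then r else 0, by
        intro m'; by_cases h : m' = m
        · subst h; simpa using hm
        · simp only [dif_neg h]; exact zero_mem _, by simp⟩
  | zero => exact ⟨∅, fun _ => 0, fun _ => zero_mem _, by simp⟩
  | add u v hu hv ihu ihv =>
      obtain ⟨t₁, f₁, hm₁, hs₁⟩ := ihu
      obtain ⟨t₂, f₂, hm₂, hs₂⟩ := ihv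
      refine ⟨t₁ ∪ t₂, fun m => (if m ∈ t₁ then f₁ m else 0) + (if m ∈ t₂ then f₂ m else 0),
        fun m => add_mem (by split <;> [exact hm₁ m; exact zero_mem _])
          (by split <;> [exact hm₂ m; exact zero_mem _]), ?_⟩
      rw [Finset.sum_add_distrib, Finset.sum_ite_mem, Finset.sum_ite_mem,
        Finset.union_inter_cancel_left, Finset.union_inter_cancel_right, hs₁, hs₂]
  | neg u hu ihu =>
      obtain ⟨t₁, f₁, hm₁, hs₁⟩ := ihu
      exact ⟨t₁, fun m => -f₁ m, fun m => neg_mem (hm₁ m), by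
        rw [Finset.sum_neg_distrib, hs₁]⟩

/-- Independence of homogeneous components. -/
lemma indep (𝓡 : GMor G → AddSubgroup R) (hgr : IsGroupoidGrading 𝓡)
    (t : Finset (GMor G)) (f : GMor G → R) (hmem : ∀ m, f m ∈ 𝓡 m)
    (hsum : ∑ m ∈ t, f m = 0) : ∀ m ∈ t, f m = 0 := by
  intro m hm
  have h2 : f m = -∑ m' ∈ t.erase m, f m' :=
    eq_neg_of_add_eq_zero_left (by rw [Finset.add_sum_erase t f hm, hsum])
  have h3 : f m ∈ ⨆ m' ∈ {m' : GMor G | m' ≠ m}, 𝓡 m' := by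
    rw [h2]
    refine neg_mem (AddSubgroup.sum_mem _ fun m' hm' => ?_)
    have hne : m' ≠ m := Finset.ne_of_mem_erase hm'
    exact AddSubgroup.mem_iSup_of_mem m' (AddSubgroup.mem_iSup_of_mem hne (hmem m'))
  have := (hgr.2.1 m).le_bot (AddSubgroup.mem_inf.2 ⟨hmem m, h3⟩)
  simpa using this

/-- Key step: a minimal nonzero element of `I` with a nonzero component in some `R_e`
is nonzero and lies in `capCent`. -/
lemma key_step (𝓡 : GMor G → AddSubgroup R) (hgr : IsGroupoidGrading 𝓡)
    (I : AddSubgroup R) (hI : IsRingIdeal I) (n : ℕ)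
    (hmin : ∀ (w : R) (t : Finset (GMor G)) (f : GMor G → R), w ∈ I → w ≠ 0 →
      (∀ m, f m ∈ 𝓡 m) → w = ∑ m ∈ t, f m → n ≤ t.card)
    (y : R) (t' : Finset (GMor G)) (f' : GMor G → R) (e : G)
    (hyI : y ∈ I) (hmem' : ∀ m, f' m ∈ 𝓡 m) (hsum' : y = ∑ m ∈ t', f' m)
    (hcard' : t'.card ≤ n) (hm₀ : (⟨e, e, 𝟙 e⟩ : GMor G) ∈ t')
    (hf₀ : f' ⟨e, e, 𝟙 e⟩ ≠ 0) :
    y ≠ 0 ∧ y ∈ capCent 𝓡 := by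
  have hyne : y ≠ 0 := by
    intro h
    exact hf₀ (indep 𝓡 hgr t' f' hmem' (by rw [← hsum', h]) _ hm₀)
  refine ⟨hyne, ?_⟩
  intro e0 z hz
  set m₀ : GMor G := ⟨e, e, 𝟙 e⟩ with hm₀def
  set f'' : GMor G → R := fun m => f' m * z - z * f' m with hf''
  have hmem'' : ∀ m, f'' m ∈ 𝓡 m := by
    intro m
    obtain ⟨a', b', p⟩ := m
    have h1 : f' ⟨a', b', p⟩ * z ∈ 𝓡 ⟨a', b', p⟩ := by
      by_cases h : a' = e0
      · subst h
        have := hgr.2.2.1 a' a' b' p (𝟙 a') (f' ⟨a', b', p⟩) (hmem' _) z hz.1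
        simpa using this
      · rw [hgr.2.2.2 ⟨a', b', p⟩ ⟨e0, e0, 𝟙 e0⟩ h (f' _) (hmem' _) z hz.1]
        exact zero_mem _
    have h2 : z * f' ⟨a', b', p⟩ ∈ 𝓡 ⟨a', b', p⟩ := by
      by_cases h : b' = e0
      · subst h
        have := hgr.2.2.1 a' b' b' (𝟙 b') p z hz.1 (f' ⟨a', b', p⟩) (hmem' _)
        simpa using this
      · rw [hgr.2.2.2 ⟨e0, e0, 𝟙 e0⟩ ⟨a', b', p⟩ (fun hh => h hh.symm) z hz.1
          (f' _) (hmem' _)]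
        exact zero_mem _
    exact sub_mem h1 h2
  have h0 : f'' m₀ = 0 := by
    by_cases h : e = e0
    · subst h
      have := hz.2 (f' m₀) (hmem' m₀)
      simp [hf'', this]
    · have hA : f' m₀ * z = 0 :=
        hgr.2.2.2 m₀ ⟨e0, e0, 𝟙 e0⟩ h (f' _) (hmem' _) z hz.1
      have hB : z * f' m₀ = 0 :=
        hgr.2.2.2 ⟨e0, e0, 𝟙 e0⟩ m₀ (fun hh => h hh.symm) z hz.1 (f' _) (hmem' _)
      simp [hf'', hA, hB]
  set w : R := y * z - z * y with hw
  have hsum'' : w = ∑ m ∈ t'.erase m₀, f'' m := by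
    have h1 : w = ∑ m ∈ t', f'' m := by
      rw [hw, hsum', Finset.sum_mul, Finset.mul_sum, ← Finset.sum_sub_distrib]
    rw [h1, ← Finset.add_sum_erase t' f'' hm₀, h0, zero_add]
  have hwI : w ∈ I := sub_mem ((hI z y hyI).2) ((hI z y hyI).1)
  have hwzero : w = 0 := by
    by_contra hwne
    have := hmin w (t'.erase m₀) f'' hwI hwne hmem'' hsum''
    have hlt : (t'.erase m₀).card < n :=
      lt_of_lt_of_le (Finset.card_erase_lt_of_mem hm₀) hcard'
    omega
  exact sub_eq_zero.mp (hw ▸ hwzero)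

/-- Let `G` be a groupoid and `R` a `G`-graded ring whose grading
is left (or right) non-degenerate. Then the ring extension
`R / ∩_{e ∈ G₀} C_R(Z(R_e))` has the ideal intersection property: every nonzero ideal
of `R` has nonzero intersection with `∩_{e ∈ G₀} C_R(Z(R_e))`. -/
theorem stmt11 {G : Type*} [Groupoid G] {R : Type*} [NonUnitalRing R]
    (𝓡 : GMor G → AddSubgroup R) (hgr : IsGroupoidGrading 𝓡)
    (hnd : LeftNonDeg 𝓡 ∨ RightNonDeg 𝓡) :
    ∀ I : AddSubgroup R, IsRingIdeal I → I ≠ ⊥ →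
      ∃ x : R, x ≠ 0 ∧ x ∈ I ∧ x ∈ capCent 𝓡 := by
  intro I hI hIne
  classical
  have hex : ∃ x ∈ I, x ≠ 0 := by
    by_contra h
    push_neg at h
    apply hIne
    ext r
    simp only [AddSubgroup.mem_bot]
    exact ⟨fun hr => h r hr, fun hr => hr ▸ zero_mem I⟩
  obtain ⟨x₀, hx₀I, hx₀ne⟩ := hex
  have hP : ∃ n : ℕ, ∃ x, ∃ (t : Finset (GMor G)) (f : GMor G → R), x ∈ I ∧ x ≠ 0 ∧
      (∀ m, f m ∈ 𝓡 m) ∧ x = ∑ m ∈ t, f m ∧ t.card = n := by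
    obtain ⟨t, f, h1, h2⟩ := rep_exists 𝓡 hgr x₀
    exact ⟨t.card, x₀, t, f, hx₀I, hx₀ne, h1, h2, rfl⟩
  set n := Nat.find hP with hn
  obtain ⟨x, t, f, hxI, hxne, hmem, hsum, hcard⟩ := Nat.find_spec hP
  have hmin : ∀ (w : R) (tw : Finset (GMor G)) (fw : GMor G → R), w ∈ I → w ≠ 0 →
      (∀ m, fw m ∈ 𝓡 m) → w = ∑ m ∈ tw, fw m → n ≤ tw.card :=
    fun w tw fw h1 h2 h3 h4 => Nat.find_min' hP ⟨w, tw, fw, h1, h2, h3, h4, rfl⟩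
  have hgex : ∃ g ∈ t, f g ≠ 0 := by
    by_contra h
    push_neg at h
    exact hxne (by rw [hsum]; exact Finset.sum_eq_zero h)
  obtain ⟨⟨a, b, k⟩, hgt, hfg⟩ := hgex
  rcases hnd with hL | hR
  · -- left non-degenerate: pass to y = s * x with a component in R_{d(k)}
    obtain ⟨s, hs, hsx⟩ := hL a b k (f ⟨a, b, k⟩) (hmem _) hfg
    set φ : GMor G → GMor G :=
      fun m => if h : m.2.1 = b then ⟨m.1, a, (m.2.2 ≫ eqToHom h) ≫ Groupoid.inv k⟩ else m
      with hφ
    set ψ : GMor G → GMor G :=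
      fun m => if h : m.2.1 = a then ⟨m.1, b, (m.2.2 ≫ eqToHom h) ≫ k⟩ else m with hψ
    set f' : GMor G → R :=
      fun m => if h : m.2.1 = a then s * f ⟨m.1, b, (m.2.2 ≫ eqToHom h) ≫ k⟩ else 0 with hf'
    set tf := t.filter (fun m => m.2.1 = b) with htf
    set t' := tf.image φ with ht'
    have hmem' : ∀ m, f' m ∈ 𝓡 m := by
      rintro ⟨c', d', j⟩
      by_cases h : d' = a
      · subst h
        simp only [hf']
        rw [dif_pos trivial]
        simp only [eqToHom_refl, Category.comp_id, Category.id_comp]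
        have h3 := hgr.2.2.1 _ _ _ (Groupoid.inv k) (j ≫ k) s hs
          (f ⟨c', b, j ≫ k⟩) (hmem _)
        have he : (j ≫ k) ≫ Groupoid.inv k = j := by simp
        rwa [he] at h3
      · simp only [hf']
        rw [dif_neg h]
        exact zero_mem _
    have hkey : ∀ m ∈ tf, ψ (φ m) = m ∧ f' (φ m) = s * f m := by
      rintro ⟨c', d', j⟩ hm
      have hd : d' = b := (Finset.mem_filter.1 hm).2
      subst hd
      constructor
      · simp [hφ, hψ]
      · simp [hφ, hf']
    have hinj : ∀ m₁ ∈ tf, ∀ m₂ ∈ tf, φ m₁ = φ m₂ → m₁ = m₂ := fun m₁ h₁ m₂ h₂ he => by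
      rw [← (hkey m₁ h₁).1, ← (hkey m₂ h₂).1, he]
    have hsum' : s * x = ∑ m' ∈ t', f' m' := by
      rw [ht', Finset.sum_image hinj, Finset.sum_congr rfl (fun m hm => (hkey m hm).2),
        hsum, Finset.mul_sum, htf]
      exact (Finset.sum_filter_of_ne (fun m hm hne => by
        by_contra hnb
        exact hne (hgr.2.2.2 ⟨b, a, Groupoid.inv k⟩ m (fun hh => hnb hh.symm) s hs
          (f m) (hmem m)))).symm
    have hφg : φ ⟨a, b, k⟩ = (⟨a, a, 𝟙 a⟩ : GMor G) := by
      simp [hφ]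
    have hm₀ : (⟨a, a, 𝟙 a⟩ : GMor G) ∈ t' := by
      rw [ht']
      exact Finset.mem_image.2 ⟨⟨a, b, k⟩, Finset.mem_filter.2 ⟨hgt, rfl⟩, hφg⟩
    have hf₀ : f' ⟨a, a, 𝟙 a⟩ ≠ 0 := by
      simpa [hf'] using hsx
    have hcard' : t'.card ≤ n := by
      calc t'.card ≤ tf.card := Finset.card_image_le
        _ ≤ t.card := Finset.card_filter_le _ _
        _ = n := hcard
    obtain ⟨hyne, hyc⟩ := key_step 𝓡 hgr I hI n hmin (s * x) t' f' a (hI s x hxI).1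
      hmem' hsum' hcard' hm₀ hf₀
    exact ⟨s * x, hyne, (hI s x hxI).1, hyc⟩
  · -- right non-degenerate: pass to y = x * s with a component in R_{c(k)}
    obtain ⟨s, hs, hsx⟩ := hR a b k (f ⟨a, b, k⟩) (hmem _) hfg
    set φ : GMor G → GMor G :=
      fun m => if h : m.1 = a then ⟨b, m.2.1, (Groupoid.inv k ≫ eqToHom h.symm) ≫ m.2.2⟩
        else m with hφ
    set ψ : GMor G → GMor G :=
      fun m => if h : m.1 = b then ⟨a, m.2.1, (k ≫ eqToHom h.symm) ≫ m.2.2⟩ else m with hψ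
    set f' : GMor G → R :=
      fun m => if h : m.1 = b then f ⟨a, m.2.1, (k ≫ eqToHom h.symm) ≫ m.2.2⟩ * s else 0
      with hf'
    set tf := t.filter (fun m => m.1 = a) with htf
    set t' := tf.image φ with ht'
    have hmem' : ∀ m, f' m ∈ 𝓡 m := by
      rintro ⟨c', d', j⟩
      by_cases h : c' = b
      · subst h
        simp only [hf']
        rw [dif_pos trivial]
        simp only [eqToHom_refl, Category.comp_id, Category.id_comp]
        have h3 := hgr.2.2.1 _ _ _ (k ≫ j) (Groupoid.inv k)
          (f ⟨a, d', k ≫ j⟩) (hmem _) s hs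
        have he : Groupoid.inv k ≫ k ≫ j = j := by simp
        rwa [he] at h3
      · simp only [hf']
        rw [dif_neg h]
        exact zero_mem _
    have hkey : ∀ m ∈ tf, ψ (φ m) = m ∧ f' (φ m) = f m * s := by
      rintro ⟨c', d', j⟩ hm
      have hd : c' = a := (Finset.mem_filter.1 hm).2
      subst hd
      constructor
      · simp [hφ, hψ]
      · simp [hφ, hf']
    have hinj : ∀ m₁ ∈ tf, ∀ m₂ ∈ tf, φ m₁ = φ m₂ → m₁ = m₂ := fun m₁ h₁ m₂ h₂ he => by
      rw [← (hkey m₁ h₁).1, ← (hkey m₂ h₂).1, he]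
    have hsum' : x * s = ∑ m' ∈ t', f' m' := by
      rw [ht', Finset.sum_image hinj, Finset.sum_congr rfl (fun m hm => (hkey m hm).2),
        hsum, Finset.sum_mul, htf]
      exact (Finset.sum_filter_of_ne (fun m hm hne => by
        by_contra hnb
        exact hne (hgr.2.2.2 m ⟨b, a, Groupoid.inv k⟩ hnb (f m) (hmem m) s hs))).symm
    have hφg : φ ⟨a, b, k⟩ = (⟨b, b, 𝟙 b⟩ : GMor G) := by
      simp [hφ]
    have hm₀ : (⟨b, b, 𝟙 b⟩ : GMor G) ∈ t' := by
      rw [ht']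
      exact Finset.mem_image.2 ⟨⟨a, b, k⟩, Finset.mem_filter.2 ⟨hgt, rfl⟩, hφg⟩
    have hf₀ : f' ⟨b, b, 𝟙 b⟩ ≠ 0 := by
      simpa [hf'] using hsx
    have hcard' : t'.card ≤ n := by
      calc t'.card ≤ tf.card := Finset.card_image_le
        _ ≤ t.card := Finset.card_filter_le _ _
        _ = n := hcard
    obtain ⟨hyne, hyc⟩ := key_step 𝓡 hgr I hI n hmin (x * s) t' f' b (hI s x hxI).2
      hmem' hsum' hcard' hm₀ hf₀
    exact ⟨x * s, hyne, (hI s x hxI).2, hyc⟩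

end PaperGrpd
end

section
/- Let G be a groupoid and let R be a G-graded ring that is s-unital epsilon-strongly graded. If R_0 is a maximal commutative subring of R, then R is a simple ring if and only if R is graded simple. -/
open Pointwise CategoryTheory

namespace PaperGrpd

variable {G : Type*} [Groupoid G] {R : Type*} [NonUnitalRing R]

section Aux

open scoped Classical

variable {𝓡 : GMor G → AddSubgroup R}

theorem internal (hgr : IsGroupoidGrading 𝓡) :
    DirectSum.IsInternal (fun m => AddSubgroup.toIntSubmodule (𝓡 m)) := by
  rw [DirectSum.isInternal_submodule_iff_iSupIndep_and_iSup_eq_top]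
  constructor
  · rw [show (fun m => AddSubgroup.toIntSubmodule (𝓡 m)) =
      (AddSubgroup.toIntSubmodule : AddSubgroup R ≃o _) ∘ 𝓡 from rfl,
      iSupIndep_map_orderIso_iff]
    intro m
    simpa using hgr.2.1 m
  · rw [show (⨆ m, AddSubgroup.toIntSubmodule (𝓡 m)) =
      AddSubgroup.toIntSubmodule (⨆ m, 𝓡 m) from (OrderIso.map_iSup _ _).symm, hgr.1]
    rfl

noncomputable def dec (hgr : IsGroupoidGrading 𝓡) :
    R ≃ₗ[ℤ] DirectSum (GMor G) fun m => AddSubgroup.toIntSubmodule (𝓡 m) :=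
  (LinearEquiv.ofBijective (DirectSum.coeLinearMap _) (internal hgr)).symm

noncomputable def comp (hgr : IsGroupoidGrading 𝓡) (x : R) (m : GMor G) : R :=
  (dec hgr x m : R)

theorem comp_mem (hgr : IsGroupoidGrading 𝓡) (x : R) (m : GMor G) :
    comp hgr x m ∈ 𝓡 m := (dec hgr x m).2

theorem comp_add (hgr : IsGroupoidGrading 𝓡) (x y : R) (m : GMor G) :
    comp hgr (x + y) m = comp hgr x m + comp hgr y m := by
  simp only [comp, map_add]; rfl

theorem comp_sub (hgr : IsGroupoidGrading 𝓡) (x y : R) (m : GMor G) :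
    comp hgr (x - y) m = comp hgr x m - comp hgr y m := by
  simp only [comp, map_sub]; rfl

theorem comp_zero (hgr : IsGroupoidGrading 𝓡) (m : GMor G) :
    comp hgr (0 : R) m = 0 := by
  simp only [comp, map_zero]; rfl

noncomputable def suppF (hgr : IsGroupoidGrading 𝓡) (x : R) : Finset (GMor G) :=
  (dec hgr x).support

theorem mem_suppF (hgr : IsGroupoidGrading 𝓡) (x : R) (m : GMor G) :
    m ∈ suppF hgr x ↔ comp hgr x m ≠ 0 := by
  unfold suppF
  rw [DFinsupp.mem_support_iff]
  constructor
  · intro h h0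
    exact h (Subtype.ext h0)
  · intro h h0
    exact h (by rw [comp, h0]; rfl)

theorem sum_comp (hgr : IsGroupoidGrading 𝓡) (x : R) :
    x = ∑ m ∈ suppF hgr x, comp hgr x m := by
  conv_lhs => rw [← (LinearEquiv.ofBijective (DirectSum.coeLinearMap _)
    (internal hgr)).apply_symm_apply x]
  erw [LinearEquiv.ofBijective_apply, DirectSum.coeLinearMap_eq_dfinsuppSum, DFinsupp.sum]
  rfl

theorem comp_of_mem (hgr : IsGroupoidGrading 𝓡) {x : R} {m : GMor G} (hx : x ∈ 𝓡 m) :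
    comp hgr x m = x := by
  have h : dec hgr x m = ⟨x, hx⟩ :=
    (internal hgr).ofBijective_coeLinearMap_of_mem (by exact hx)
  rw [comp, h]

theorem comp_of_mem_ne (hgr : IsGroupoidGrading 𝓡) {x : R} {m m' : GMor G} (hx : x ∈ 𝓡 m)
    (hne : m ≠ m') : comp hgr x m' = 0 := by
  have h : dec hgr x m' = 0 :=
    (internal hgr).ofBijective_coeLinearMap_of_mem_ne hne (by exact hx)
  rw [comp, h]; rfl

theorem ne_zero_of_mem_suppF (hgr : IsGroupoidGrading 𝓡) {x : R}
    (h : ∃ m, m ∈ suppF hgr x) : x ≠ 0 := by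
  obtain ⟨m, hm⟩ := h
  rw [mem_suppF] at hm
  intro h0
  exact hm (by rw [h0, comp_zero])

theorem suppF_nonempty_of_ne (hgr : IsGroupoidGrading 𝓡) {x : R} (h : x ≠ 0) :
    ∃ m, m ∈ suppF hgr x := by
  by_contra hc
  push_neg at hc
  apply h
  rw [sum_comp hgr x, Finset.sum_eq_zero]
  intro m hm
  exact absurd hm (hc m)

theorem comp_eq_of_sum (hgr : IsGroupoidGrading 𝓡) {T : Finset (GMor G)} {c : GMor G → R}
    (hcmem : ∀ m, c m ∈ 𝓡 m) (hc0 : ∀ m ∉ T, c m = 0) {x : R}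
    (hx : x = ∑ m ∈ T, c m) (m : GMor G) : comp hgr x m = c m := by
  set w : DirectSum (GMor G) fun m => AddSubgroup.toIntSubmodule (𝓡 m) :=
    ∑ m' ∈ T, DirectSum.of _ m' (⟨c m', hcmem m'⟩ : AddSubgroup.toIntSubmodule (𝓡 m')) with hw
  have hcw : DirectSum.coeLinearMap (fun m => AddSubgroup.toIntSubmodule (𝓡 m)) w = x := by
    rw [hw, map_sum, hx]
    exact Finset.sum_congr rfl fun m' _ => DirectSum.coeLinearMap_of _ _ _
  have hdec : dec hgr x = w := by
    rw [dec, LinearEquiv.symm_apply_eq]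
    erw [LinearEquiv.ofBijective_apply, hcw]
  rw [comp, hdec, hw, DFinsupp.finset_sum_apply, AddSubmonoidClass.coe_finset_sum]
  by_cases hm : m ∈ T
  · rw [Finset.sum_eq_single_of_mem m hm]
    · rw [DirectSum.of_eq_same]
    · intro m' _ hne
      rw [DirectSum.of_eq_of_ne _ _ _ hne.symm, ZeroMemClass.coe_zero]
  · rw [Finset.sum_eq_zero, hc0 m hm]
    intro m' hm'
    rw [DirectSum.of_eq_of_ne _ _ _ (fun h : m = m' => hm (h ▸ hm')), ZeroMemClass.coe_zero]

theorem mul_id_left (hgr : IsGroupoidGrading 𝓡) {e : G} {z : R} (hz : z ∈ 𝓡 ⟨e, e, 𝟙 e⟩)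
    {m : GMor G} {r : R} (hr : r ∈ 𝓡 m) : z * r ∈ 𝓡 m := by
  obtain ⟨c, d, h⟩ := m
  by_cases hd : d = e
  · subst hd
    simpa using hgr.2.2.1 c d d (𝟙 d) h z hz r hr
  · rw [hgr.2.2.2 ⟨e, e, 𝟙 e⟩ ⟨c, d, h⟩ (fun hh => hd (by simpa using hh.symm)) z hz r hr]
    exact zero_mem _

theorem mul_id_right (hgr : IsGroupoidGrading 𝓡) {e : G} {z : R} (hz : z ∈ 𝓡 ⟨e, e, 𝟙 e⟩)
    {m : GMor G} {r : R} (hr : r ∈ 𝓡 m) : r * z ∈ 𝓡 m := by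
  obtain ⟨c, d, h⟩ := m
  by_cases hc : c = e
  · subst hc
    simpa using hgr.2.2.1 c c d h (𝟙 c) r hr z hz
  · rw [hgr.2.2.2 ⟨c, d, h⟩ ⟨e, e, 𝟙 e⟩ (fun hh => hc (by simpa using hh)) r hr z hz]
    exact zero_mem _

theorem comp_not_mem (hgr : IsGroupoidGrading 𝓡) {x : R} {m : GMor G}
    (hm : m ∉ suppF hgr x) : comp hgr x m = 0 := by
  by_contra h
  exact hm ((mem_suppF hgr x m).mpr h)

theorem comp_mul_id_left (hgr : IsGroupoidGrading 𝓡) {e : G} {z : R}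
    (hz : z ∈ 𝓡 ⟨e, e, 𝟙 e⟩) (x : R) (m : GMor G) :
    comp hgr (z * x) m = z * comp hgr x m := by
  refine comp_eq_of_sum hgr (T := suppF hgr x) (c := fun m => z * comp hgr x m)
    (fun m => mul_id_left hgr hz (comp_mem hgr x m)) ?_ ?_ m
  · intro m hm
    show z * comp hgr x m = 0
    rw [comp_not_mem hgr hm, mul_zero]
  · conv_lhs => rw [sum_comp hgr x]
    rw [Finset.mul_sum]

theorem comp_mul_id_right (hgr : IsGroupoidGrading 𝓡) {e : G} {z : R}
    (hz : z ∈ 𝓡 ⟨e, e, 𝟙 e⟩) (x : R) (m : GMor G) :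
    comp hgr (x * z) m = comp hgr x m * z := by
  refine comp_eq_of_sum hgr (T := suppF hgr x) (c := fun m => comp hgr x m * z)
    (fun m => mul_id_right hgr hz (comp_mem hgr x m)) ?_ ?_ m
  · intro m hm
    show comp hgr x m * z = 0
    rw [comp_not_mem hgr hm, zero_mul]
  · conv_lhs => rw [sum_comp hgr x]
    rw [Finset.sum_mul]

theorem comp_grZero (hgr : IsGroupoidGrading 𝓡) {w : R} (hw : w ∈ grZero 𝓡)
    {m : GMor G} (hm : ∀ e : G, m ≠ ⟨e, e, 𝟙 e⟩) : comp hgr w m = 0 := by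
  rw [grZero] at hw
  refine AddSubgroup.iSup_induction _ (C := fun w => comp hgr w m = 0) hw ?_ ?_ ?_
  · intro e x hx
    exact comp_of_mem_ne hgr hx (fun hh => hm e hh.symm)
  · exact comp_zero hgr m
  · intro x y hx hy
    rw [comp_add hgr, hx, hy, add_zero]

theorem exists_factor {A B : AddSubgroup R} {v : R} (hv : v ∈ sumProd A B) (r : R)
    (h : r * v ≠ 0) : ∃ s ∈ A, r * s ≠ 0 := by
  revert h
  refine AddSubgroup.closure_induction
    (p := fun v _ => r * v ≠ 0 → ∃ s ∈ A, r * s ≠ 0) ?_ ?_ ?_ ?_ hv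
  · rintro x hx
    rw [Set.mem_mul] at hx
    obtain ⟨p, hp, q, hq, rfl⟩ := hx
    intro hne
    exact ⟨p, hp, fun h0 => hne (by rw [← mul_assoc, h0, zero_mul])⟩
  · intro h
    exact absurd (mul_zero r) h
  · intro x y hx hy px py h
    rw [mul_add] at h
    by_cases hx0 : r * x = 0
    · exact py (fun h0 => h (by rw [hx0, h0, add_zero]))
    · exact px hx0
  · intro x hx px h
    exact px (fun h0 => h (by rw [mul_neg, h0, neg_zero]))

theorem sumProd_le (hgr : IsGroupoidGrading 𝓡) (a b c : G) (g : b ⟶ c) (h : a ⟶ b) :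
    sumProd (𝓡 ⟨b, c, g⟩) (𝓡 ⟨a, b, h⟩) ≤ 𝓡 ⟨a, c, h ≫ g⟩ := by
  rw [sumProd, AddSubgroup.closure_le]
  rintro p hp
  rw [Set.mem_mul] at hp
  obtain ⟨u, hu, v, hv, rfl⟩ := hp
  exact hgr.2.2.1 a b c g h u hu v hv

noncomputable def phi (a b : G) (g : a ⟶ b) (m : GMor G) : GMor G :=
  if hc : m.1 = a then ⟨b, m.2.1, Groupoid.inv g ≫ (eqToHom hc.symm ≫ m.2.2)⟩ else m

theorem phi_self (a b : G) (g : a ⟶ b) : phi a b g ⟨a, b, g⟩ = ⟨b, b, 𝟙 b⟩ := by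
  rw [phi, dif_pos rfl]
  simp [Groupoid.inv_comp]

theorem phi_mem (hgr : IsGroupoidGrading 𝓡) (a b : G) (g : a ⟶ b) {s : R}
    (hs : s ∈ 𝓡 ⟨b, a, Groupoid.inv g⟩) {m : GMor G} {r : R} (hr : r ∈ 𝓡 m) :
    r * s ∈ 𝓡 (phi a b g m) := by
  obtain ⟨c, d, h⟩ := m
  by_cases hc : c = a
  · subst hc
    rw [phi, dif_pos rfl]
    simp only [eqToHom_refl, Category.id_comp]
    exact hgr.2.2.1 b c d h (Groupoid.inv g) r hr s hs
  · rw [phi, dif_neg hc,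
      hgr.2.2.2 ⟨c, d, h⟩ ⟨b, a, Groupoid.inv g⟩ hc r hr s hs]
    exact zero_mem _

theorem phi_fiber (a b : G) (g : a ⟶ b) {m : GMor G} (hm : m.1 = a)
    (h : phi a b g m = ⟨b, b, 𝟙 b⟩) : m = ⟨a, b, g⟩ := by
  obtain ⟨c, d, k⟩ := m
  simp only at hm
  subst hm
  rw [phi, dif_pos rfl] at h
  simp only [eqToHom_refl, Category.id_comp] at h
  have hd : d = b := congrArg (fun m => m.2.1) h
  subst hd
  injection h with h1 h2
  injection h2 with h3 h4
  have h5 := h4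
  have hk : k = g := by
    have h6 := congrArg (fun t => g ≫ t) h5
    simpa [← Category.assoc, Groupoid.comp_inv] using h6
  rw [hk]

theorem stepA (hgr : IsGroupoidGrading 𝓡) {I : AddSubgroup R} (hI : IsRingIdeal I)
    {x : R} (hxI : x ∈ I) {a b : G} {g : a ⟶ b}
    (hm : (⟨a, b, g⟩ : GMor G) ∈ suppF hgr x)
    {s : R} (hs : s ∈ 𝓡 ⟨b, a, Groupoid.inv g⟩)
    (hxs : comp hgr x ⟨a, b, g⟩ * s ≠ 0) :
    x * s ∈ I ∧ comp hgr (x * s) ⟨b, b, 𝟙 b⟩ ≠ 0 ∧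
      (suppF hgr (x * s)).card ≤ (suppF hgr x).card := by
  have hxsI : x * s ∈ I := (hI s x hxI).2
  set T := (suppF hgr x).image (phi a b g) with hT
  set c' : GMor G → R := fun m' =>
    ∑ m ∈ (suppF hgr x).filter (fun m => phi a b g m = m'), comp hgr x m * s with hc'
  have hc'mem : ∀ m', c' m' ∈ 𝓡 m' := by
    intro m'
    refine sum_mem ?_
    intro m hm2
    rw [Finset.mem_filter] at hm2
    have := phi_mem hgr a b g hs (comp_mem hgr x m)
    rwa [hm2.2] at this
  have hc'0 : ∀ m' ∉ T, c' m' = 0 := by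
    intro m' hm'
    refine Finset.sum_eq_zero fun m hm2 => ?_
    rw [Finset.mem_filter] at hm2
    exact absurd (Finset.mem_image.mpr ⟨m, hm2.1, hm2.2⟩) hm'
  have hxsum : x * s = ∑ m' ∈ T, c' m' := by
    conv_lhs => rw [sum_comp hgr x]
    rw [Finset.sum_mul, hT]
    exact (Finset.sum_fiberwise_of_maps_to
      (fun m hm2 => Finset.mem_image_of_mem _ hm2) _).symm
  have hcomp : ∀ m', comp hgr (x * s) m' = c' m' :=
    fun m' => comp_eq_of_sum hgr hc'mem hc'0 hxsum m'
  refine ⟨hxsI, ?_, ?_⟩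
  · rw [hcomp]
    have : c' ⟨b, b, 𝟙 b⟩ = comp hgr x ⟨a, b, g⟩ * s := by
      refine Finset.sum_eq_single_of_mem (⟨a, b, g⟩ : GMor G) ?_ ?_
      · rw [Finset.mem_filter]
        exact ⟨hm, phi_self a b g⟩
      · intro m hm2 hne
        rw [Finset.mem_filter] at hm2
        by_cases hc : m.1 = a
        · exact absurd (phi_fiber a b g hc hm2.2) hne
        · rw [hgr.2.2.2 m ⟨b, a, Groupoid.inv g⟩ hc _ (comp_mem hgr x m) s hs]
    rw [this]
    exact hxs
  · calc (suppF hgr (x * s)).card ≤ T.card := by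
          refine Finset.card_le_card ?_
          intro m' hm'
          rw [mem_suppF] at hm'
          by_contra hnm
          exact hm' (by rw [hcomp]; exact hc'0 m' hnm)
    _ ≤ (suppF hgr x).card := Finset.card_image_le

theorem id_le_grZero (e : G) : 𝓡 ⟨e, e, 𝟙 e⟩ ≤ grZero 𝓡 := by
  rw [grZero]; exact le_iSup (fun e : G => 𝓡 ⟨e, e, 𝟙 e⟩) e

theorem stmt12' {G : Type*} [Groupoid G] {R : Type*} [NonUnitalRing R]
    (𝓡 : GMor G → AddSubgroup R) (hgr : IsGroupoidGrading 𝓡)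
    (heps : ∀ (a b : G) (g : a ⟶ b), ∀ r ∈ 𝓡 ⟨a, b, g⟩,
      (∃ u ∈ sumProd (𝓡 ⟨a, b, g⟩) (𝓡 ⟨b, a, Groupoid.inv g⟩), u * r = r) ∧
      (∃ v ∈ sumProd (𝓡 ⟨b, a, Groupoid.inv g⟩) (𝓡 ⟨a, b, g⟩), r * v = r))
    (hmax : {x : R | ∀ y ∈ grZero 𝓡, x * y = y * x} = (grZero 𝓡 : Set R)) :
    (∀ I : AddSubgroup R, IsRingIdeal I → I = ⊥ ∨ I = ⊤) ↔
    (∀ I : AddSubgroup R, IsRingIdeal I → I = (⨆ m : GMor G, (I ⊓ 𝓡 m)) →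
      I = ⊥ ∨ I = ⊤) := by
  constructor
  · intro hs I hI _
    exact hs I hI
  · intro hgs I hI
    by_cases hbot : I = ⊥
    · exact Or.inl hbot
    right
    classical
    have hcomm : ∀ p ∈ grZero 𝓡, ∀ q ∈ grZero 𝓡, p * q = q * p := by
      intro p hp q hq
      have hm : p ∈ {x : R | ∀ y ∈ grZero 𝓡, x * y = y * x} := by
        rw [hmax]; exact hp
      exact hm q hq
    obtain ⟨x₀, hx₀I, hx₀⟩ : ∃ x ∈ I, x ≠ 0 := by
      by_contra hc
      push_neg at hc
      exact hbot ((AddSubgroup.eq_bot_iff_forall I).mpr hc)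
    have hex : ∃ n, ∃ z, z ∈ I ∧ z ≠ 0 ∧ (suppF hgr z).card = n :=
      ⟨_, x₀, hx₀I, hx₀, rfl⟩
    set n := Nat.find hex with hn
    obtain ⟨x, hxI, hx0, hxcard⟩ := Nat.find_spec hex
    have hmin : ∀ z, z ∈ I → z ≠ 0 → n ≤ (suppF hgr z).card := by
      intro z hz h0
      exact Nat.find_min' hex ⟨z, hz, h0, rfl⟩
    obtain ⟨⟨a, b, g⟩, hmem⟩ := suppF_nonempty_of_ne hgr hx0
    have hxg := (mem_suppF hgr x _).mp hmem
    obtain ⟨-, ⟨v, hv, hvr⟩⟩ := heps a b g _ (comp_mem hgr x ⟨a, b, g⟩)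
    obtain ⟨s, hs, hxs⟩ := exists_factor hv _ (by rw [hvr]; exact hxg)
    obtain ⟨hyI, hyb, hycard⟩ := stepA hgr hI hxI hmem hs hxs
    set y := x * s with hy
    have hy0 : y ≠ 0 := by
      intro h0
      exact hyb (by rw [h0, comp_zero])
    have hymB : (⟨b, b, 𝟙 b⟩ : GMor G) ∈ suppF hgr y := (mem_suppF _ _ _).mpr hyb
    have hycard' : (suppF hgr y).card = n :=
      le_antisymm (hycard.trans_eq hxcard) (hmin y hyI hy0)
    have hyz : ∀ e : G, ∀ z ∈ 𝓡 ⟨e, e, 𝟙 e⟩, z * y = y * z := by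
      intro e z hz
      by_contra hne
      have hD : z * y - y * z ∈ I :=
        AddSubgroup.sub_mem _ (hI z y hyI).1 (hI z y hyI).2
      have hDcomp : ∀ m, comp hgr (z * y - y * z) m
          = z * comp hgr y m - comp hgr y m * z := by
        intro m
        rw [comp_sub hgr, comp_mul_id_left hgr hz, comp_mul_id_right hgr hz]
      have hDb : comp hgr (z * y - y * z) ⟨b, b, 𝟙 b⟩ = 0 := by
        rw [hDcomp,
          hcomm z (id_le_grZero e hz) _ (id_le_grZero b (comp_mem hgr y ⟨b, b, 𝟙 b⟩)),
          sub_self]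
      have hsub : suppF hgr (z * y - y * z) ⊆ (suppF hgr y).erase ⟨b, b, 𝟙 b⟩ := by
        intro m hm2
        rw [Finset.mem_erase]
        have hm3 := (mem_suppF hgr _ m).mp hm2
        constructor
        · intro heq
          rw [heq] at hm3
          exact hm3 hDb
        · rw [mem_suppF]
          intro h0
          exact hm3 (by rw [hDcomp, h0, mul_zero, zero_mul, sub_zero])
      have hD0 : z * y - y * z ≠ 0 := sub_ne_zero_of_ne hne
      have h1 := hmin _ hD hD0
      have h2 := Finset.card_le_card hsub
      have h3 := Finset.card_erase_of_mem hymB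
      have h4 : 0 < (suppF hgr y).card := Finset.card_pos.mpr ⟨_, hymB⟩
      omega
    have hycomm : ∀ w ∈ grZero 𝓡, y * w = w * y := by
      intro w hw
      rw [grZero] at hw
      refine AddSubgroup.iSup_induction _ (C := fun w => y * w = w * y) hw ?_ ?_ ?_
      · intro e zz hz
        exact (hyz e zz hz).symm
      · show y * 0 = 0 * y
        rw [mul_zero, zero_mul]
      · intro p q hp hq
        show y * (p + q) = (p + q) * y
        rw [mul_add, add_mul, hp, hq]
    have hygz : y ∈ grZero 𝓡 := by
      have hm : y ∈ {x : R | ∀ w ∈ grZero 𝓡, x * w = w * x} := fun w hw => hycomm w hw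
      rwa [hmax] at hm
    obtain ⟨⟨u, hu, hur⟩, -⟩ := heps b b (𝟙 b) _ (comp_mem hgr y ⟨b, b, 𝟙 b⟩)
    have huB : u ∈ 𝓡 ⟨b, b, 𝟙 b⟩ := by
      have hle := sumProd_le hgr b b b (𝟙 b) (Groupoid.inv (𝟙 b))
      rw [Groupoid.inv_comp] at hle
      exact hle hu
    have huy : u * y = comp hgr y ⟨b, b, 𝟙 b⟩ := by
      have hside : ∀ m ∈ suppF hgr y, m ≠ (⟨b, b, 𝟙 b⟩ : GMor G) →
          u * comp hgr y m = 0 := by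
        intro m hm2 hne
        by_cases hid : ∃ e : G, m = ⟨e, e, 𝟙 e⟩
        · obtain ⟨e, rfl⟩ := hid
          have heb : b ≠ e := fun h => hne (by rw [h])
          exact hgr.2.2.2 ⟨b, b, 𝟙 b⟩ ⟨e, e, 𝟙 e⟩ heb u huB _ (comp_mem hgr y _)
        · push_neg at hid
          rw [comp_grZero hgr hygz hid, mul_zero]
      conv_lhs => rw [sum_comp hgr y, Finset.mul_sum]
      rw [Finset.sum_eq_single_of_mem _ hymB hside]
      exact hur
    have hybI : comp hgr y ⟨b, b, 𝟙 b⟩ ∈ I := by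
      rw [← huy]
      exact (hI u y hyI).1
    set J := ⨆ m : GMor G, (I ⊓ 𝓡 m) with hJ
    have hJle : J ≤ I := iSup_le fun m => inf_le_left
    have hJideal : IsRingIdeal J := by
      intro r w hw
      rw [hJ] at hw
      refine AddSubgroup.iSup_induction _
        (C := fun w => r * w ∈ J ∧ w * r ∈ J) hw ?_ ?_ ?_
      · intro m w hw2
        rw [AddSubgroup.mem_inf] at hw2
        obtain ⟨hwI, hwm⟩ := hw2
        have hr : r ∈ ⨆ m' : GMor G, 𝓡 m' := by rw [hgr.1]; trivial
        refine AddSubgroup.iSup_induction _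
          (C := fun r => r * w ∈ J ∧ w * r ∈ J) hr ?_ ?_ ?_
        · intro m' r' hr'
          constructor
          · by_cases hcp : m'.1 = m.2.1
            · obtain ⟨a1, b1, h1⟩ := m
              obtain ⟨a2, b2, h2⟩ := m'
              simp only at hcp
              subst hcp
              have hmem2 : r' * w ∈ 𝓡 ⟨a1, b2, h1 ≫ h2⟩ :=
                hgr.2.2.1 a1 a2 b2 h2 h1 r' hr' w hwm
              refine (le_iSup (fun m => I ⊓ 𝓡 m) (⟨a1, b2, h1 ≫ h2⟩ : GMor G)) ?_
              rw [AddSubgroup.mem_inf]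
              exact ⟨(hI r' w hwI).1, hmem2⟩
            · rw [hgr.2.2.2 m' m hcp r' hr' w hwm]
              exact zero_mem _
          · by_cases hcp : m.1 = m'.2.1
            · obtain ⟨a1, b1, h1⟩ := m
              obtain ⟨a2, b2, h2⟩ := m'
              simp only at hcp
              subst hcp
              have hmem2 : w * r' ∈ 𝓡 ⟨a2, b1, h2 ≫ h1⟩ :=
                hgr.2.2.1 a2 a1 b1 h1 h2 w hwm r' hr'
              refine (le_iSup (fun m => I ⊓ 𝓡 m) (⟨a2, b1, h2 ≫ h1⟩ : GMor G)) ?_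
              rw [AddSubgroup.mem_inf]
              exact ⟨(hI r' w hwI).2, hmem2⟩
            · rw [hgr.2.2.2 m m' hcp w hwm r' hr']
              exact zero_mem _
        · constructor
          · rw [zero_mul]; exact zero_mem _
          · rw [mul_zero]; exact zero_mem _
        · intro p q hp hq
          constructor
          · rw [add_mul]; exact add_mem hp.1 hq.1
          · rw [mul_add]; exact add_mem hp.2 hq.2
      · constructor
        · rw [mul_zero]; exact zero_mem _
        · rw [zero_mul]; exact zero_mem _
      · intro p q hp hq
        constructor
        · rw [mul_add]; exact add_mem hp.1 hq.1
        · rw [add_mul]; exact add_mem hp.2 hq.2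
    have hJgr : J = ⨆ m : GMor G, (J ⊓ 𝓡 m) := by
      apply le_antisymm
      · conv_lhs => rw [hJ]
        refine iSup_le fun m => ?_
        refine le_trans ?_ (le_iSup (fun m => J ⊓ 𝓡 m) m)
        refine le_inf ?_ inf_le_right
        rw [hJ]
        exact le_trans (le_iSup (fun m => I ⊓ 𝓡 m) m) le_rfl
      · exact iSup_le fun m => inf_le_left
    rcases hgs J hJideal hJgr with h | h
    · exfalso
      have hybJ : comp hgr y ⟨b, b, 𝟙 b⟩ ∈ J := by
        rw [hJ]
        refine (le_iSup (fun m => I ⊓ 𝓡 m) (⟨b, b, 𝟙 b⟩ : GMor G)) ?_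
        rw [AddSubgroup.mem_inf]
        exact ⟨hybI, comp_mem hgr y _⟩
      rw [h] at hybJ
      exact hyb (by simpa using hybJ)
    · rw [eq_top_iff, ← h]
      exact hJle

end Aux

/-- Let `G` be a groupoid and `R` a `G`-graded ring that is
s-unital epsilon-strongly graded. If `R₀` is a maximal commutative subring of `R`,
then `R` is simple iff `R` is graded simple. -/
theorem stmt12 {G : Type*} [Groupoid G] {R : Type*} [NonUnitalRing R]
    (𝓡 : GMor G → AddSubgroup R) (hgr : IsGroupoidGrading 𝓡)
    (heps : ∀ (a b : G) (g : a ⟶ b), ∀ r ∈ 𝓡 ⟨a, b, g⟩,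
      (∃ u ∈ sumProd (𝓡 ⟨a, b, g⟩) (𝓡 ⟨b, a, Groupoid.inv g⟩), u * r = r) ∧
      (∃ v ∈ sumProd (𝓡 ⟨b, a, Groupoid.inv g⟩) (𝓡 ⟨a, b, g⟩), r * v = r))
    (hmax : {x : R | ∀ y ∈ grZero 𝓡, x * y = y * x} = (grZero 𝓡 : Set R)) :
    RingSimple R ↔ GradedSimple 𝓡 := by
  exact stmt12' 𝓡 hgr heps hmax

end PaperGrpd
end

section
/- Let A be a ring and M an A-bimodule. Then M is s-unital (for every m ∈ M there exist a, b ∈ A with am = m and mb = m) if and only if for every n ∈ ℕ and all m_1, …, m_n ∈ M there exists c ∈ A such that c m_i = m_i c = m_i for all i ∈ {1, …, n}. -/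
namespace PaperMod

/-- Let `A` be a (possibly non-unital) ring and `M` an `A`-bimodule,
with left action `l` and right action `r`. Then `M` is s-unital (for every `m` there
are `a, b ∈ A` with `a • m = m` and `m • b = m`) iff for every `n ∈ ℕ` and all
`m₁, …, mₙ ∈ M` there is a single `c ∈ A` with `c • mᵢ = mᵢ • c = mᵢ` for all `i`. -/
theorem stmt13 {A M : Type*} [NonUnitalRing A] [AddCommGroup M]
    (l : A → M → M) (r : M → A → M)
    (hl_addM : ∀ (a : A) (m n : M), l a (m + n) = l a m + l a n)
    (hl_addA : ∀ (a b : A) (m : M), l (a + b) m = l a m + l b m)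
    (hl_mul : ∀ (a b : A) (m : M), l (a * b) m = l a (l b m))
    (hr_addM : ∀ (m n : M) (a : A), r (m + n) a = r m a + r n a)
    (hr_addA : ∀ (m : M) (a b : A), r m (a + b) = r m a + r m b)
    (hr_mul : ∀ (m : M) (a b : A), r m (a * b) = r (r m a) b)
    (hcompat : ∀ (a : A) (m : M) (b : A), r (l a m) b = l a (r m b)) :
    ((∀ m : M, ∃ a : A, l a m = m) ∧ (∀ m : M, ∃ b : A, r m b = m)) ↔
      ∀ (n : ℕ) (f : Fin n → M), ∃ c : A, ∀ i : Fin n, l c (f i) = f i ∧ r (f i) c = f i := by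
  -- basic arithmetic lemmas about the actions
  have hl0 : ∀ a : A, l a 0 = 0 := by
    intro a
    have := hl_addM a 0 0
    simpa using (add_left_cancel (a := l a 0) (by rw [← hl_addM]; simp)).symm
  have hlsubM : ∀ (a : A) (m n : M), l a (m - n) = l a m - l a n := by
    intro a m n
    have h := hl_addM a (m - n) n
    rw [sub_add_cancel] at h
    exact eq_sub_of_add_eq h.symm
  have hlsubA : ∀ (a b : A) (m : M), l (a - b) m = l a m - l b m := by
    intro a b m
    have h := hl_addA (a - b) b m
    rw [sub_add_cancel] at h
    exact eq_sub_of_add_eq h.symm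
  have hr0 : ∀ a : A, r 0 a = 0 := by
    intro a
    have := hr_addM 0 0 a
    simpa using (add_left_cancel (a := r 0 a) (by rw [← hr_addM]; simp)).symm
  have hrsubM : ∀ (m n : M) (a : A), r (m - n) a = r m a - r n a := by
    intro m n a
    have h := hr_addM (m - n) n a
    rw [sub_add_cancel] at h
    exact eq_sub_of_add_eq h.symm
  have hrsubA : ∀ (m : M) (a b : A), r m (a - b) = r m a - r m b := by
    intro m a b
    have h := hr_addA m (a - b) b
    rw [sub_add_cancel] at h
    exact eq_sub_of_add_eq h.symm
  constructor
  · rintro ⟨hL, hR⟩ n f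
    -- left finite units
    have left : ∀ (k : ℕ) (g : Fin k → M), ∃ a : A, ∀ i, l a (g i) = g i := by
      intro k
      induction k with
      | zero => exact fun g => ⟨0, fun i => i.elim0⟩
      | succ k ih =>
        intro g
        obtain ⟨e, he⟩ := ih (fun i => g i.succ)
        obtain ⟨u, hu⟩ := hL (g 0 - l e (g 0))
        refine ⟨u + e - u * e, ?_⟩
        have key : ∀ m : M, l (u + e - u * e) m = l u (m - l e m) + l e m := by
          intro m
          rw [hlsubA, hl_addA, hl_mul, hlsubM]
          abel
        intro i
        cases i using Fin.cases with
        | zero => rw [key, hu]; abel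
        | succ j =>
          rw [key, he j]
          simp [hl0]
    -- right finite units
    have right : ∀ (k : ℕ) (g : Fin k → M), ∃ b : A, ∀ i, r (g i) b = g i := by
      intro k
      induction k with
      | zero => exact fun g => ⟨0, fun i => i.elim0⟩
      | succ k ih =>
        intro g
        obtain ⟨e, he⟩ := ih (fun i => g i.succ)
        obtain ⟨u, hu⟩ := hR (g 0 - r (g 0) e)
        refine ⟨e + u - e * u, ?_⟩
        have key : ∀ m : M, r m (e + u - e * u) = r (m - r m e) u + r m e := by
          intro m
          rw [hrsubA, hr_addA, hr_mul, hrsubM]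
          abel
        intro i
        cases i using Fin.cases with
        | zero => rw [key, hu]; abel
        | succ j =>
          rw [key, he j]
          simp [hr0]
    obtain ⟨a, ha⟩ := left n f
    obtain ⟨b, hb⟩ := right n f
    refine ⟨a + b - b * a, fun i => ⟨?_, ?_⟩⟩
    · rw [hlsubA, hl_addA, hl_mul, ha]
      abel
    · rw [hrsubA, hr_addA, hr_mul, hb]
      abel
  · intro h
    constructor
    · intro m
      obtain ⟨c, hc⟩ := h 1 (fun _ => m)
      exact ⟨c, (hc 0).1⟩
    · intro m
      obtain ⟨c, hc⟩ := h 1 (fun _ => m)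
      exact ⟨c, (hc 0).2⟩

end PaperMod
end

section
/- A ring A is s-unital (for every a ∈ A there exist b, c ∈ A with ba = a and ac = a) if and only if for every n ∈ ℕ and all a_1, …, a_n ∈ A there exists c ∈ A such that c a_i = a_i c = a_i for all i ∈ {1, …, n}. -/
namespace PaperMod

private lemma leftAux {A : Type*} [NonUnitalRing A]
    (h : ∀ a : A, ∃ b : A, b * a = a) :
    ∀ (n : ℕ) (f : Fin n → A), ∃ e : A, ∀ i, e * f i = f i := by
  intro n
  induction n with
  | zero =>
    intro f
    exact ⟨0, fun i => i.elim0⟩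
  | succ n ih =>
    intro f
    obtain ⟨e, he⟩ := ih (f ∘ Fin.succ)
    obtain ⟨g, hg⟩ := h (f 0 - e * f 0)
    refine ⟨e + g - g * e, fun i => ?_⟩
    refine Fin.cases ?_ (fun j => ?_) i
    · have : (e + g - g * e) * f 0 = e * f 0 + g * (f 0 - e * f 0) := by noncomm_ring
      rw [this, hg]; abel
    · have hj := he j
      simp only [Function.comp_apply] at hj
      have : (e + g - g * e) * f j.succ
          = e * f j.succ + g * (f j.succ - e * f j.succ) := by noncomm_ring
      rw [this, hj, sub_self, mul_zero, add_zero]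

private lemma rightAux {A : Type*} [NonUnitalRing A]
    (h : ∀ a : A, ∃ c : A, a * c = a) :
    ∀ (n : ℕ) (f : Fin n → A), ∃ e : A, ∀ i, f i * e = f i := by
  intro n
  induction n with
  | zero =>
    intro f
    exact ⟨0, fun i => i.elim0⟩
  | succ n ih =>
    intro f
    obtain ⟨e, he⟩ := ih (f ∘ Fin.succ)
    obtain ⟨g, hg⟩ := h (f 0 - f 0 * e)
    refine ⟨e + g - e * g, fun i => ?_⟩
    refine Fin.cases ?_ (fun j => ?_) i
    · have : f 0 * (e + g - e * g) = f 0 * e + (f 0 - f 0 * e) * g := by noncomm_ring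
      rw [this, hg]; abel
    · have hj := he j
      simp only [Function.comp_apply] at hj
      have : f j.succ * (e + g - e * g)
          = f j.succ * e + (f j.succ - f j.succ * e) * g := by noncomm_ring
      rw [this, hj, sub_self, zero_mul, add_zero]

/-- A (possibly non-unital) ring `A` is s-unital (for every `a ∈ A`
there are `b, c ∈ A` with `b a = a` and `a c = a`) iff for every `n ∈ ℕ` and all
`a₁, …, aₙ ∈ A` there is a single `c ∈ A` with `c aᵢ = aᵢ c = aᵢ` for all `i`. -/
theorem stmt14 {A : Type*} [NonUnitalRing A] :
    (∀ a : A, ∃ b c : A, b * a = a ∧ a * c = a) ↔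
      ∀ (n : ℕ) (f : Fin n → A), ∃ c : A, ∀ i : Fin n, c * f i = f i ∧ f i * c = f i := by
  constructor
  · intro h n f
    obtain ⟨x, hx⟩ := leftAux (fun a => (h a).imp fun b hb => hb.choose_spec.1) n f
    obtain ⟨y, hy⟩ := rightAux (fun a => (h a).choose_spec.imp fun c hc => hc.2) n f
    refine ⟨x + y - y * x, fun i => ⟨?_, ?_⟩⟩
    · have : (x + y - y * x) * f i = x * f i + y * (f i - x * f i) := by noncomm_ring
      rw [this, hx i, sub_self, mul_zero, add_zero]
    · have : f i * (x + y - y * x) = f i * y + (f i - f i * y) * x := by noncomm_ring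
      rw [this, hy i, sub_self, zero_mul, add_zero]
  · intro h a
    obtain ⟨c, hc⟩ := h 1 (fun _ => a)
    exact ⟨c, c, (hc 0).1, (hc 0).2⟩

end PaperMod
end

section
/- Let K be a nonzero s-unital ring and let X be a locally compact Hausdorff totally disconnected topological space. Let L_c(X) be the ring of locally constant compactly supported functions X → K under pointwise operations. If I is a two-sided ideal of L_c(X) such that for every k ∈ K and every x ∈ X there exists a compact open subset V of X with x ∈ V and k_V ∈ I, then I = L_c(X). -/
namespace PaperLc

/-- indicator of a compact open set is locally constant with compact support -/
lemma indicator_locConst {K : Type*} [NonUnitalRing K] {X : Type*} [TopologicalSpace X]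
    [T2Space X] (k : K) {D : Set X} (hDc : IsCompact D) (hDo : IsOpen D) :
    IsLocallyConstant (D.indicator fun _ => k) ∧
      HasCompactSupport (D.indicator fun _ => k) := by
  constructor
  · intro s
    by_cases h0 : (0 : K) ∈ s <;> by_cases hk : k ∈ s
    · have : (D.indicator fun _ => k) ⁻¹' s = Set.univ := by
        ext y; by_cases hy : y ∈ D <;> simp [Set.indicator_apply, hy, h0, hk]
      rw [this]; exact isOpen_univ
    · have : (D.indicator fun _ => k) ⁻¹' s = Dᶜ := by
        ext y; by_cases hy : y ∈ D <;> simp [Set.indicator_apply, hy, h0, hk]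
      rw [this]; exact hDc.isClosed.isOpen_compl
    · have : (D.indicator fun _ => k) ⁻¹' s = D := by
        ext y; by_cases hy : y ∈ D <;> simp [Set.indicator_apply, hy, h0, hk]
      rw [this]; exact hDo
    · have : (D.indicator fun _ => k) ⁻¹' s = ∅ := by
        ext y; by_cases hy : y ∈ D <;> simp [Set.indicator_apply, hy, h0, hk]
      rw [this]; exact isOpen_empty
  · exact hDc.of_isClosed_subset isClosed_closure
      (closure_minimal Set.support_indicator_subset hDc.isClosed)

/-- compact open neighborhood basis -/
lemma exists_compact_open_nbhd {X : Type*} [TopologicalSpace X] [LocallyCompactSpace X]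
    [T2Space X] [TotallyDisconnectedSpace X] {x : X} {U : Set X} (hU : IsOpen U)
    (hx : x ∈ U) : ∃ C : Set X, IsCompact C ∧ IsOpen C ∧ x ∈ C ∧ C ⊆ U := by
  obtain ⟨s, scomp, xint, sU⟩ := exists_compact_subset hU hx
  obtain ⟨V, hV, hxV, hVs⟩ :=
    loc_compact_Haus_tot_disc_of_zero_dim.exists_subset_of_mem_open xint isOpen_interior
  exact ⟨V, scomp.of_isClosed_subset hV.isClosed (hVs.trans interior_subset), hV.isOpen,
    hxV, (hVs.trans interior_subset).trans sU⟩

/-- Let `K` be a nonzero s-unital ring and `X` a locally compact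
Hausdorff totally disconnected space. Let `Lc` be the (non-unital) ring of locally
constant compactly supported functions `X → K`, realised as the non-unital subring of
`X → K` whose elements are exactly the locally constant compactly supported functions.
If `I` is a two-sided ideal of `Lc` such that for every `k ∈ K` and every `x ∈ X`
there is a compact open `V ⊆ X` with `x ∈ V` and the function `k_V` (value `k` on `V`,
`0` outside) in `I`, then `I = Lc`. -/
theorem stmt18 {K : Type*} [NonUnitalRing K] [Nontrivial K]
    (hK : ∀ k : K, ∃ l l' : K, l * k = k ∧ k * l' = k)
    {X : Type*} [TopologicalSpace X] [LocallyCompactSpace X] [T2Space X]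
    [TotallyDisconnectedSpace X]
    (Lc : NonUnitalSubring (X → K))
    (hLc : ∀ f : X → K, f ∈ Lc ↔ IsLocallyConstant f ∧ HasCompactSupport f)
    (I : AddSubgroup Lc)
    (hI : ∀ r : Lc, ∀ f ∈ I, r * f ∈ I ∧ f * r ∈ I)
    (h : ∀ (k : K) (x : X), ∃ V : Set X, IsCompact V ∧ IsOpen V ∧ x ∈ V ∧
      ∃ f ∈ I, (f : X → K) = V.indicator fun _ => k) :
    I = ⊤ := by
  classical
  -- the indicator of a compact open set, as an element of Lc
  have hmem : ∀ (k : K) (D : Set X), IsCompact D → IsOpen D →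
      (D.indicator fun _ => k) ∈ Lc := fun k D hDc hDo =>
    (hLc _).2 (indicator_locConst k hDc hDo)
  -- restriction of an indicator in I to a compact open set stays in I
  have hrestrict : ∀ (l : K), (∃ m, l * m = l) → ∀ (V D : Set X), IsCompact D → IsOpen D →
      (∃ g ∈ I, (g : X → K) = V.indicator fun _ => l) →
      ∃ g ∈ I, (g : X → K) = (V ∩ D).indicator fun _ => l := by
    rintro l ⟨m, hlm⟩ V D hDc hDo ⟨g, hgI, hg⟩
    refine ⟨g * ⟨_, hmem m D hDc hDo⟩, (hI _ _ hgI).2, ?_⟩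
    funext y
    show (g : X → K) y * D.indicator (fun _ => m) y = _
    by_cases hyV : y ∈ V <;> by_cases hyD : y ∈ D <;>
      simp [hg, Set.indicator_apply, hyV, hyD, hlm]
  -- union of two compact open indicators in I
  have hunion : ∀ (l : K), (∃ m, l * m = l) → ∀ (A B : Set X),
      IsCompact B → IsOpen B →
      (∃ g ∈ I, (g : X → K) = A.indicator fun _ => l) →
      (∃ g ∈ I, (g : X → K) = B.indicator fun _ => l) →
      ∃ g ∈ I, (g : X → K) = (A ∪ B).indicator fun _ => l := by
    rintro l ⟨m, hlm⟩ A B hBc hBo ⟨gA, hgAI, hgA⟩ ⟨gB, hgBI, hgB⟩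
    refine ⟨gA + gB - gA * ⟨_, hmem m B hBc hBo⟩,
      sub_mem (add_mem hgAI hgBI) (hI _ _ hgAI).2, ?_⟩
    funext y
    show (gA : X → K) y + (gB : X → K) y - (gA : X → K) y * B.indicator (fun _ => m) y = _
    by_cases hyA : y ∈ A <;> by_cases hyB : y ∈ B <;>
      simp [hgA, hgB, Set.indicator_apply, hyA, hyB, hlm]
  -- for every k and every compact open D there is a left unit l of k with l_D ∈ I
  have hfull : ∀ (k : K) (D : Set X), IsCompact D → IsOpen D →
      ∃ l : K, l * k = k ∧ ∃ g ∈ I, (g : X → K) = D.indicator fun _ => l := by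
    intro k D hDc hDo
    obtain ⟨l, -, hlk, -⟩ := hK k
    obtain ⟨-, m, -, hlm⟩ := hK l
    refine ⟨l, hlk, ?_⟩
    choose V hVc hVo hxV g hgI hg using h l
    obtain ⟨t, ht⟩ := hDc.elim_finite_subcover V hVo
      (fun y _ => Set.mem_iUnion.2 ⟨y, hxV y⟩)
    have key : ∀ t : Finset X, (IsCompact (D ∩ ⋃ x ∈ t, V x) ∧ IsOpen (D ∩ ⋃ x ∈ t, V x)) ∧
        ∃ g ∈ I, (g : X → K) = (D ∩ ⋃ x ∈ t, V x).indicator fun _ => l := by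
      intro t
      induction t using Finset.induction_on with
      | empty =>
        refine ⟨⟨by simp, by simp⟩, 0, zero_mem I, ?_⟩
        funext y
        simp
      | @insert a t ha IH =>
        obtain ⟨⟨hc, ho⟩, hg'⟩ := IH
        have hsplit : (D ∩ ⋃ x ∈ insert a t, V x) = (V a ∩ D) ∪ (D ∩ ⋃ x ∈ t, V x) := by
          simp only [Finset.set_biUnion_insert]
          rw [Set.inter_union_distrib_left, Set.inter_comm D (V a)]
        have h1 : ∃ g ∈ I, (g : X → K) = (V a ∩ D).indicator fun _ => l :=
          hrestrict l ⟨m, hlm⟩ (V a) D hDc hDo ⟨g a, hgI a, hg a⟩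
        have h2 := hunion l ⟨m, hlm⟩ (V a ∩ D) (D ∩ ⋃ x ∈ t, V x) hc ho h1 hg'
        rw [← hsplit] at h2
        constructor
        · constructor
          · rw [hsplit]
            exact ((hVc a).inter_right hDc.isClosed).union hc
          · rw [hsplit]
            exact ((hVo a).inter hDo).union ho
        · exact h2
    obtain ⟨-, g', hg'I, hg'⟩ := key t
    rw [Set.inter_eq_self_of_subset_left ht] at hg'
    exact ⟨g', hg'I, hg'⟩
  -- now the main argument
  rw [eq_top_iff]
  rintro f -
  obtain ⟨hflc, hfcs⟩ := (hLc f).1 f.2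
  -- compact open neighborhoods on which f is constant
  have hnbhd : ∀ x : X, ∃ C : Set X, IsCompact C ∧ IsOpen C ∧ x ∈ C ∧
      C ⊆ (f : X → K) ⁻¹' {(f : X → K) x} :=
    fun x => exists_compact_open_nbhd (hflc {(f : X → K) x}) rfl
  choose C hCc hCo hxC hCU using hnbhd
  choose l hl g hgI hgc using fun x => hfull ((f : X → K) x) (C x) (hCc x) (hCo x)
  obtain ⟨t, ht⟩ := hfcs.elim_finite_subcover C hCo
    (fun y hy => Set.mem_iUnion.2 ⟨y, hxC y⟩)
  -- induction on the finite cover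
  have key : ∀ t : Finset X, ∀ p : Lc,
      (∀ y, (p : X → K) y = (f : X → K) y ∨ (p : X → K) y = 0) →
      tsupport (p : X → K) ⊆ ⋃ x ∈ t, C x → p ∈ I := by
    intro t
    induction t using Finset.induction_on with
    | empty =>
      intro p hp hsupp
      have : p = 0 := by
        apply Subtype.ext
        funext y
        by_contra hy
        have : y ∈ tsupport (p : X → K) := subset_closure (by exact hy)
        simpa using hsupp this
      rw [this]; exact zero_mem I
    | @insert a t ha IH =>
      intro p hp hsupp
      have hga : (⟨_, hmem (l a) (C a) (hCc a) (hCo a)⟩ : Lc) ∈ I := by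
        have := hgI a
        have heq : (⟨_, hmem (l a) (C a) (hCc a) (hCo a)⟩ : Lc) = g a :=
          Subtype.ext (hgc a).symm
        rw [heq]; exact this
      set e : Lc := ⟨_, hmem (l a) (C a) (hCc a) (hCo a)⟩ with he
      have hep : e * p ∈ I := (hI p e hga).2
      -- the remainder q
      set q : Lc := p - e * p with hq
      have hqval : ∀ y, (q : X → K) y = (p : X → K) y -
          (C a).indicator (fun _ => l a) y * (p : X → K) y := fun y => rfl
      have hq0 : ∀ y ∈ C a, (q : X → K) y = 0 := by
        intro y hy
        have hfy : (f : X → K) y = (f : X → K) a := hCU a hy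
        have hlp : l a * (p : X → K) y = (p : X → K) y := by
          rcases hp y with h' | h'
          · rw [h', hfy, hl a]
          · rw [h', mul_zero]
        rw [hqval y, Set.indicator_of_mem hy, hlp, sub_self]
      have hq1 : ∀ y, y ∉ C a → (q : X → K) y = (p : X → K) y := by
        intro y hy
        rw [hqval y, Set.indicator_of_notMem hy, zero_mul, sub_zero]
      have hqI : q ∈ I := by
        apply IH
        · intro y
          by_cases hy : y ∈ C a
          · exact Or.inr (hq0 y hy)
          · rw [hq1 y hy]; exact hp y
        · have hsub : tsupport (q : X → K) ⊆ tsupport (p : X → K) ∩ (C a)ᶜ := by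
            apply closure_minimal
            · intro y hy
              by_cases hyC : y ∈ C a
              · exact absurd (hq0 y hyC) hy
              · exact ⟨subset_closure (fun h' => hy (by rw [hq1 y hyC]; exact h')), hyC⟩
            · exact (isClosed_tsupport _).inter (isClosed_compl_iff.2 (hCo a))
          intro y hy
          obtain ⟨hy1, hy2⟩ := hsub hy
          have := hsupp hy1
          rw [Finset.set_biUnion_insert] at this
          rcases this with h' | h'
          · exact absurd h' hy2
          · exact h'
      have : p = q + e * p := by rw [hq]; exact (sub_add_cancel p (e * p)).symm
      rw [this]
      exact add_mem hqI hep
  exact key t f (fun y => Or.inl rfl) ht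

end PaperLc
end
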